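/- If a feature 𝓕 is right-continued, then its maximal version M𝓕 and its minimal version m𝓕 are convex features. -/

import Mathlib

open CategoryTheory

universe u v

/-- A feature on a finitely concrete mono category `(C, Φ)`: for each object `X`,
a collection of subsets of the underlying set `Φ.obj X`. -/
def Feature {C : Type u} [Category.{v} C] (Φ : C ⥤ Type v) :=
  ∀ X : C, Set (Set (Φ.obj X))

/-- The steady `𝓕`-sets of a filtration `F` at `(a ≤ b)`. -/
def steadySet {C : Type u} [Category.{v} C] (Φ : C ⥤ Type v) (𝓕 : Feature Φ)
    (F : ℝ ⥤ C) (a b : ℝ) : Set (Set (Φ.obj (F.obj a))) :=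
  {A | ∀ (w : ℝ) (h1 : a ≤ w), w ≤ b → Φ.map (F.map (homOfLE h1)) '' A ∈ 𝓕 (F.obj w)}

/-- The ranging `𝓕`-sets of a filtration `F` at `(a ≤ b)`. -/
def rangingSet {C : Type u} [Category.{v} C] (Φ : C ⥤ Type v) (𝓕 : Feature Φ)
    (F : ℝ ⥤ C) (a b : ℝ) : Set (Set (Φ.obj (F.obj a))) :=
  {A | ∃ (x y : ℝ) (hx : x ≤ a) (_ : b ≤ y) (hy : a ≤ y) (A' : Set (Φ.obj (F.obj x))),
      A' ∈ 𝓕 (F.obj x) ∧ A = Φ.map (F.map (homOfLE hx)) '' A' ∧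
      Φ.map (F.map (homOfLE hy)) '' A ∈ 𝓕 (F.obj y)}

/-- A feature is convex if `(A,X) ∈ 𝓕` and `ι'ι(A,X) ∈ 𝓕` imply `ι(A,X) ∈ 𝓕`. -/
def ConvexFeature {C : Type u} [Category.{v} C] (Φ : C ⥤ Type v) (𝓕 : Feature Φ) : Prop :=
  ∀ {X X' X'' : C} (ι : X ⟶ X') (ι' : X' ⟶ X'') (A : Set (Φ.obj X)),
    A ∈ 𝓕 X → Φ.map (ι ≫ ι') '' A ∈ 𝓕 X'' → Φ.map ι '' A ∈ 𝓕 X'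

/-- A feature is right-continued if it is preserved by pushing forward along monomorphisms. -/
def RightContinued {C : Type u} [Category.{v} C] (Φ : C ⥤ Type v) (𝓕 : Feature Φ) : Prop :=
  ∀ {X X' : C} (ι : X ⟶ X') (A : Set (Φ.obj X)), A ∈ 𝓕 X → Φ.map ι '' A ∈ 𝓕 X'

/-- A feature is left-continued if it is reflected by pushing forward along monomorphisms. -/
def LeftContinued {C : Type u} [Category.{v} C] (Φ : C ⥤ Type v) (𝓕 : Feature Φ) : Prop :=
  ∀ {X X' : C} (ι : X ⟶ X') (A : Set (Φ.obj X)), Φ.map ι '' A ∈ 𝓕 X' → A ∈ 𝓕 X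

/-- A feature is monotone if it is left-continued and downward closed in the subset. -/
def MonotoneFeature {C : Type u} [Category.{v} C] (Φ : C ⥤ Type v) (𝓕 : Feature Φ) : Prop :=
  LeftContinued Φ 𝓕 ∧ ∀ (X : C) (A B : Set (Φ.obj X)), B ⊆ A → A ∈ 𝓕 X → B ∈ 𝓕 X

/-- The maximal version of a feature. -/
def maxVersion {C : Type u} [Category.{v} C] (Φ : C ⥤ Type v) (𝓕 : Feature Φ) : Feature Φ :=
  fun X => {A | A ∈ 𝓕 X ∧ ∀ B : Set (Φ.obj X), A ⊆ B → B ∈ 𝓕 X → A = B}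

/-- The minimal version of a feature. -/
def minVersion {C : Type u} [Category.{v} C] (Φ : C ⥤ Type v) (𝓕 : Feature Φ) : Feature Φ :=
  fun X => {A | A ∈ 𝓕 X ∧ ∀ B : Set (Φ.obj X), B ⊆ A → B ∈ 𝓕 X → A = B}

/-- if `𝓕` is right-continued then `M𝓕` and `m𝓕` are convex. -/
theorem maxVersion_minVersion_convex {C : Type u} [Category.{v} C] (Φ : C ⥤ Type v)
    (hfin : ∀ X : C, Finite (Φ.obj X)) (hfaith : Φ.Faithful)
    (hinj : ∀ {X Y : C} (f : X ⟶ Y), Function.Injective (Φ.map f))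
    (hmono : ∀ {X Y : C} (f : X ⟶ Y), Mono f)
    (𝓕 : Feature Φ)
    (hiso : ∀ {X Y : C} (f : X ≅ Y) (A : Set (Φ.obj X)), A ∈ 𝓕 X ↔ Φ.map f.hom '' A ∈ 𝓕 Y)
    (hrc : RightContinued Φ 𝓕) :
    ConvexFeature Φ (maxVersion Φ 𝓕) ∧ ConvexFeature Φ (minVersion Φ 𝓕) := by
  have hcomp : ∀ {X X' X'' : C} (ι : X ⟶ X') (ι' : X' ⟶ X'') (A : Set (Φ.obj X)),
      Φ.map (ι ≫ ι') '' A = Φ.map ι' '' (Φ.map ι '' A) := by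
    intro X X' X'' ι ι' A
    rw [Functor.map_comp, types_comp, Set.image_comp]
  constructor
  · rintro X X' X'' ι ι' A ⟨hA, hAmax⟩ ⟨hA'', hmax''⟩
    refine ⟨hrc ι A hA, ?_⟩
    intro B hsub hB
    have h1 : Φ.map (ι ≫ ι') '' A ⊆ Φ.map ι' '' B := by
      rw [hcomp]; exact Set.image_mono hsub
    have h2 := hmax'' (Φ.map ι' '' B) h1 (hrc ι' B hB)
    rw [hcomp] at h2
    exact Set.image_injective.mpr (hinj ι') h2
  · rintro X X' X'' ι ι' A ⟨hA, hAmin⟩ ⟨hA'', hmin''⟩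
    refine ⟨hrc ι A hA, ?_⟩
    intro B hsub hB
    have h1 : Φ.map ι' '' B ⊆ Φ.map (ι ≫ ι') '' A := by
      rw [hcomp]; exact Set.image_mono hsub
    have h2 := hmin'' (Φ.map ι' '' B) h1 (hrc ι' B hB)
    rw [hcomp] at h2
    exact Set.image_injective.mpr (hinj ι') h2
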